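/- Let p, q ≥ 1 be integers and a, b ∈ ℝ ∖ {2, −2}. Set A := T(a), B := T(b), λ := (a + √(a²−4))/2 and μ := (b + √(b²−4))/2 (principal complex square root; then λ, μ ∈ ℂ ∖ {0, 1, −1}). Then: (1) max_{p'∈{p−1,p,p+1}} |F_{p'}(λ)| ≤ ‖A^p‖ ≤ 2 max_{p'∈{p−1,p,p+1}} |F_{p'}(λ)|, and likewise max_{q'∈{q−1,q,q+1}} |F_{q'}(μ)| ≤ ‖B^q‖ ≤ 2 max_{q'∈{q−1,q,q+1}} |F_{q'}(μ)|; (2) |F_{p+1}(λ)F_{q+1}(μ) − F_p(λ)F_q(μ)| ≤ ‖A^p B^q‖ ≤ 4 max_{p'∈{p−1,p,p+1}} |F_{p'}(λ)| · max_{q'∈{q−1,q,q+1}} |F_{q'}(μ)|; (3) ‖B^{2p} A^p B^p‖ ≥ |F_{2p+1}(μ)(F_{p+1}(λ)F_{p+1}(μ) − F_p(λ)F_p(μ)) − F_{2p}(μ)(F_p(λ)F_{p+1}(μ) − F_{p−1}(λ)F_p(μ))|; (4) ‖A^p B^q A^p B^q‖ ≥ |(F_{p+1}(λ)F_{q+1}(μ)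 − F_p(λ)F_q(μ))² + (−F_{p+1}(λ)F_q(μ) + F_p(λ)F_{q−1}(μ)) (F_p(λ)F_{q+1}(μ) − F_{p−1}(λ)F_q(μ))|. -/

import Mathlib

open scoped Matrix.Norms.L2Operator

/-- The Schrödinger transfer matrix `T(a)` with rows `(a, -1)` and `(1, 0)`. -/
noncomputable def transferM (a : ℝ) : Matrix (Fin 2) (Fin 2) ℝ := !![a, -1; 1, 0]

/-- The function `F_q(z) = (z^q - z^{-q})/(z - z⁻¹)`. -/
noncomputable def Ffun {K : Type*} [Field K] (q : ℕ) (z : K) : K :=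
  (z ^ (q : ℤ) - z ^ (-(q : ℤ))) / (z - z⁻¹)

/-- `max_{p' ∈ {p-1, p, p+1}} |F_{p'}(z)|`. -/
noncomputable def maxF3 (p : ℕ) (z : ℂ) : ℝ :=
  max (‖Ffun (p - 1) z‖)
    (max (‖Ffun p z‖) (‖Ffun (p + 1) z‖))

noncomputable def cheb (a : ℝ) : ℕ → ℝ
  | 0 => 0
  | 1 => 1
  | (n+2) => a * cheb a (n+1) - cheb a n

lemma Ffun_rec {z : ℂ} (hz : z ≠ 0) (n : ℕ) :
    Ffun (n+2) z = (z + z⁻¹) * Ffun (n+1) z - Ffun n z := by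
  unfold Ffun
  rw [mul_div_assoc', div_sub_div_same]
  congr 1
  simp only [zpow_natCast, zpow_neg]
  have h1 : z ^ (n+1) ≠ 0 := pow_ne_zero _ hz
  have h2 : z ^ (n+2) ≠ 0 := pow_ne_zero _ hz
  have h0 : z ^ n ≠ 0 := pow_ne_zero _ hz
  field_simp
  ring

lemma cheb_eq_Ffun (a : ℝ) (lam : ℂ) (h0 : lam ≠ 0) (hd : lam - lam⁻¹ ≠ 0)
    (hsum : lam + lam⁻¹ = (a : ℂ)) : ∀ n, (cheb a n : ℂ) = Ffun n lam := by
  have key : ∀ n, ((cheb a n : ℂ) = Ffun n lam) ∧ ((cheb a (n+1) : ℂ) = Ffun (n+1) lam) := by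
    intro n
    induction n with
    | zero =>
      constructor
      · simp [cheb, Ffun]
      · simp [cheb, Ffun, zpow_one, div_self hd]
    | succ n ih =>
      refine ⟨ih.2, ?_⟩
      rw [Ffun_rec h0, hsum, ← ih.1, ← ih.2]
      rw [show cheb a (n+2) = a * cheb a (n+1) - cheb a n from rfl]
      push_cast
      ring
  exact fun n => (key n).1

lemma transfer_pow (a : ℝ) (n : ℕ) :
    transferM a ^ (n+1) = !![cheb a (n+2), -cheb a (n+1); cheb a (n+1), -cheb a n] := by
  induction n with
  | zero =>
    have h2 : cheb a 2 = a := by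
      rw [show cheb a 2 = a * cheb a 1 - cheb a 0 from rfl]; simp [cheb]
    simp [transferM, cheb, h2]
  | succ n ih =>
    have h3 : cheb a (n+1+2) = a * cheb a (n+2) - cheb a (n+1) := rfl
    have h2 : cheb a (n+2) = a * cheb a (n+1) - cheb a n := rfl
    rw [pow_succ, ih, transferM, Matrix.mul_fin_two, h3, h2]
    ext i j
    fin_cases i <;> fin_cases j <;> simp <;> ring

lemma entry_abs_le_l2norm (M : Matrix (Fin 2) (Fin 2) ℝ) (i j : Fin 2) : |M i j| ≤ ‖M‖ := by
  have h := M.l2_opNorm_mulVec (EuclideanSpace.single j (1:ℝ))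
  rw [EuclideanSpace.norm_single, norm_one, mul_one] at h
  refine le_trans ?_ h
  have hv : ∀ i', (M.mulVec (EuclideanSpace.single j (1:ℝ))) i' = M i' j := by
    intro i'
    simp [Matrix.mulVec, dotProduct, Fin.sum_univ_two, EuclideanSpace.single_apply]
  rw [EuclideanSpace.norm_eq]
  rw [show |M i j| = Real.sqrt (|M i j|^2) by rw [Real.sqrt_sq_eq_abs, abs_abs]]
  apply Real.sqrt_le_sqrt
  simp only [EuclideanSpace.equiv, PiLp.continuousLinearEquiv_symm_apply, Fin.sum_univ_two,
    Real.norm_eq_abs, sq_abs]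
  rw [hv 0, hv 1]
  fin_cases i <;> simp <;> nlinarith [sq_nonneg (M 0 j), sq_nonneg (M 1 j)]

lemma l2norm_le_two_mul (M : Matrix (Fin 2) (Fin 2) ℝ) (c : ℝ) (hc : 0 ≤ c)
    (h : ∀ i j, |M i j| ≤ c) : ‖M‖ ≤ 2 * c := by
  rw [Matrix.l2_opNorm_def]
  refine ContinuousLinearMap.opNorm_le_bound _ (by positivity) fun x => ?_
  have hx : ‖x‖ = Real.sqrt (x 0 ^ 2 + x 1 ^ 2) := by
    rw [EuclideanSpace.norm_eq]
    simp [Fin.sum_univ_two, sq_abs]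
  have happ : ‖(LinearEquiv.trans Matrix.toEuclideanLin LinearMap.toContinuousLinearMap M) x‖
      = Real.sqrt ((M 0 0 * x 0 + M 0 1 * x 1)^2 + (M 1 0 * x 0 + M 1 1 * x 1)^2) := by
    have : (LinearEquiv.trans Matrix.toEuclideanLin LinearMap.toContinuousLinearMap M) x
        = Matrix.toEuclideanLin M x := rfl
    rw [this, Matrix.toEuclideanLin_apply, EuclideanSpace.norm_eq]
    simp [Matrix.mulVec, dotProduct, Fin.sum_univ_two,
      sq_abs]
  rw [happ, hx]
  rw [show (2:ℝ) * c * Real.sqrt (x 0 ^2 + x 1^2) = Real.sqrt ((2*c)^2 * (x 0^2 + x 1^2)) by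
    rw [Real.sqrt_mul (by positivity), Real.sqrt_sq (by positivity)]]
  apply Real.sqrt_le_sqrt
  have sqle : ∀ i j, M i j ^ 2 ≤ c ^ 2 := by
    intro i j
    have := abs_le.mp (h i j); nlinarith
  nlinarith [sq_nonneg (M 0 0 * x 1 - M 0 1 * x 0), sq_nonneg (M 1 0 * x 1 - M 1 1 * x 0),
    sqle 0 0, sqle 0 1, sqle 1 0, sqle 1 1, sq_nonneg (x 0), sq_nonneg (x 1)]

lemma lam_props (a : ℝ) (ha : a ≠ 2) (ha' : a ≠ -2) (lam : ℂ)
    (hlam : lam = ((a : ℂ) + ((a : ℂ) ^ 2 - 4) ^ ((1 : ℂ) / 2)) / 2) :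
    lam ≠ 0 ∧ lam - lam⁻¹ ≠ 0 ∧ lam + lam⁻¹ = (a : ℂ) := by
  set s := ((a : ℂ)^2 - 4) ^ ((1:ℂ)/2) with hs
  have hne : (a:ℂ)^2 - 4 ≠ 0 := by
    intro hh
    have h1 : ((a^2 - 4 : ℝ) : ℂ) = 0 := by push_cast; linear_combination hh
    have h2 : a^2 - 4 = 0 := by exact_mod_cast h1
    have h3 : (a-2)*(a+2) = 0 := by linear_combination h2
    rcases mul_eq_zero.mp h3 with h|h
    · exact ha (by linarith)
    · exact ha' (by linarith)
  have hs2 : s^2 = (a:ℂ)^2 - 4 := by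
    rw [hs, show ((1:ℂ)/2) = (((2:ℕ)):ℂ)⁻¹ by norm_num]
    exact Complex.cpow_nat_inv_pow _ (by norm_num)
  have quad : lam^2 - (a:ℂ)*lam + 1 = 0 := by
    rw [hlam]; ring_nf; linear_combination hs2/4
  have h0 : lam ≠ 0 := by
    intro h; rw [h] at quad; simp at quad
  have hinv : lam⁻¹ = (a:ℂ) - lam := by
    have : lam * ((a:ℂ) - lam) = 1 := by linear_combination -quad
    exact inv_eq_of_mul_eq_one_right this
  have hsne : s ≠ 0 := fun h => hne (by rw [← hs2, h]; ring)
  refine ⟨h0, ?_, by rw [hinv]; ring⟩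
  rw [hinv, hlam]
  convert hsne using 1
  ring

/-- **Norm bounds on powers of transfer matrices** (Lemma 4.6). With
`λ = (a + √(a²-4))/2`, `μ = (b + √(b²-4))/2` (principal complex square root),
`A = T(a)`, `B = T(b)`, the operator norms of `A^p`, `B^q`, `A^p B^q`, `B^{2p} A^p B^p` and
`A^p B^q A^p B^q` are controlled by the function `F`. -/
theorem norm_bounds_matrix_powers (p q : ℕ) (hp : 1 ≤ p) (hq : 1 ≤ q)
    (a b : ℝ) (ha : a ≠ 2) (ha' : a ≠ -2) (hb : b ≠ 2) (hb' : b ≠ -2)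
    (lam mu : ℂ)
    (hlam : lam = ((a : ℂ) + ((a : ℂ) ^ 2 - 4) ^ ((1 : ℂ) / 2)) / 2)
    (hmu : mu = ((b : ℂ) + ((b : ℂ) ^ 2 - 4) ^ ((1 : ℂ) / 2)) / 2)
    (A B : Matrix (Fin 2) (Fin 2) ℝ) (hA : A = transferM a) (hB : B = transferM b) :
    (maxF3 p lam ≤ ‖A ^ p‖ ∧ ‖A ^ p‖ ≤ 2 * maxF3 p lam) ∧
    (maxF3 q mu ≤ ‖B ^ q‖ ∧ ‖B ^ q‖ ≤ 2 * maxF3 q mu) ∧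
    (‖Ffun (p + 1) lam * Ffun (q + 1) mu - Ffun p lam * Ffun q mu‖ ≤
        ‖A ^ p * B ^ q‖ ∧
      ‖A ^ p * B ^ q‖ ≤ 4 * maxF3 p lam * maxF3 q mu) ∧
    (‖Ffun (2 * p + 1) mu *
          (Ffun (p + 1) lam * Ffun (p + 1) mu - Ffun p lam * Ffun p mu) -
        Ffun (2 * p) mu *
          (Ffun p lam * Ffun (p + 1) mu - Ffun (p - 1) lam * Ffun p mu)‖ ≤
      ‖B ^ (2 * p) * A ^ p * B ^ p‖) ∧
    (‖(Ffun (p + 1) lam * Ffun (q + 1) mu - Ffun p lam * Ffun q mu) ^ 2 +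
        (-(Ffun (p + 1) lam * Ffun q mu) + Ffun p lam * Ffun (q - 1) mu) *
          (Ffun p lam * Ffun (q + 1) mu - Ffun (p - 1) lam * Ffun q mu)‖ ≤
      ‖A ^ p * B ^ q * (A ^ p) * B ^ q‖) := by
  obtain ⟨hl0, hld, hls⟩ := lam_props a ha ha' lam hlam
  obtain ⟨hm0, hmd, hms⟩ := lam_props b hb hb' mu hmu
  have hfF : ∀ n, ((cheb a n : ℂ) = Ffun n lam) := cheb_eq_Ffun a lam hl0 hld hls
  have hgF : ∀ n, ((cheb b n : ℂ) = Ffun n mu) := cheb_eq_Ffun b mu hm0 hmd hms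
  set f := cheb a with hfdef
  set g := cheb b with hgdef
  have absF : ∀ n, ‖Ffun n lam‖ = |f n| := fun n => by
    rw [← hfF n, Complex.norm_real, Real.norm_eq_abs]
  have absG : ∀ n, ‖Ffun n mu‖ = |g n| := fun n => by
    rw [← hgF n, Complex.norm_real, Real.norm_eq_abs]
  obtain ⟨k, rfl⟩ : ∃ k, p = k + 1 := ⟨p - 1, (Nat.succ_pred_eq_of_pos hp).symm⟩
  obtain ⟨l, rfl⟩ : ∃ l, q = l + 1 := ⟨q - 1, (Nat.succ_pred_eq_of_pos hq).symm⟩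
  have hApow : A ^ (k+1) = !![f (k+2), -f (k+1); f (k+1), -f k] := by
    rw [hA]; exact transfer_pow a k
  have hBpow : B ^ (l+1) = !![g (l+2), -g (l+1); g (l+1), -g l] := by
    rw [hB]; exact transfer_pow b l
  have hBp : B ^ (k+1) = !![g (k+2), -g (k+1); g (k+1), -g k] := by
    rw [hB]; exact transfer_pow b k
  have hB2p : B ^ (2*(k+1)) = !![g (2*k+1+2), -g (2*k+1+1); g (2*k+1+1), -g (2*k+1)] := by
    rw [hB, show 2*(k+1) = 2*k+1+1 by ring]; exact transfer_pow b (2*k+1)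
  -- maxF3 values
  set mA := max |f k| (max |f (k+1)| |f (k+2)|) with hmAdef
  set mB := max |g l| (max |g (l+1)| |g (l+2)|) with hmBdef
  have hmaxA : maxF3 (k+1) lam = mA := by
    simp only [maxF3, Nat.add_sub_cancel, absF, hmAdef]
  have hmaxB : maxF3 (l+1) mu = mB := by
    simp only [maxF3, Nat.add_sub_cancel, absG, hmBdef]
  have hmA0 : 0 ≤ mA := le_trans (abs_nonneg (f k)) (le_max_left _ _)
  have hmB0 : 0 ≤ mB := le_trans (abs_nonneg (g l)) (le_max_left _ _)
  have bk : |f k| ≤ mA := le_max_left _ _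
  have bk1 : |f (k+1)| ≤ mA := le_trans (le_max_left _ _) (le_max_right _ _)
  have bk2 : |f (k+2)| ≤ mA := le_trans (le_max_right _ _) (le_max_right _ _)
  have cl : |g l| ≤ mB := le_max_left _ _
  have cl1 : |g (l+1)| ≤ mB := le_trans (le_max_left _ _) (le_max_right _ _)
  have cl2 : |g (l+2)| ≤ mB := le_trans (le_max_right _ _) (le_max_right _ _)
  -- entry bounds for A^(k+1) and B^(l+1)
  have entA : ∀ i j, |(A ^ (k+1)) i j| ≤ ‖A ^ (k+1)‖ := entry_abs_le_l2norm _
  have entB : ∀ i j, |(B ^ (l+1)) i j| ≤ ‖B ^ (l+1)‖ := entry_abs_le_l2norm _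
  have nA_lower : mA ≤ ‖A ^ (k+1)‖ := by
    refine max_le ?_ (max_le ?_ ?_)
    · refine le_trans (le_of_eq ?_) (entA 1 1); rw [hApow]; simp
    · refine le_trans (le_of_eq ?_) (entA 1 0); rw [hApow]; simp
    · refine le_trans (le_of_eq ?_) (entA 0 0); rw [hApow]; simp
  have nB_lower : mB ≤ ‖B ^ (l+1)‖ := by
    refine max_le ?_ (max_le ?_ ?_)
    · refine le_trans (le_of_eq ?_) (entB 1 1); rw [hBpow]; simp
    · refine le_trans (le_of_eq ?_) (entB 1 0); rw [hBpow]; simp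
    · refine le_trans (le_of_eq ?_) (entB 0 0); rw [hBpow]; simp
  have nA_upper : ‖A ^ (k+1)‖ ≤ 2 * mA := by
    refine l2norm_le_two_mul _ mA hmA0 fun i j => ?_
    rw [hApow]
    fin_cases i <;> fin_cases j <;>
      simp only [show ((⟨0, by norm_num⟩ : Fin 2) = 0) from rfl,
        show ((⟨1, by norm_num⟩ : Fin 2) = 1) from rfl, Matrix.cons_val', Matrix.cons_val_zero,
        Matrix.cons_val_one, Matrix.head_cons, Matrix.empty_val', Matrix.cons_val_fin_one,
        Matrix.head_fin_const, Matrix.of_apply, abs_neg] <;>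
      first | exact bk2 | exact bk1 | exact bk
  have nB_upper : ‖B ^ (l+1)‖ ≤ 2 * mB := by
    refine l2norm_le_two_mul _ mB hmB0 fun i j => ?_
    rw [hBpow]
    fin_cases i <;> fin_cases j <;>
      simp only [show ((⟨0, by norm_num⟩ : Fin 2) = 0) from rfl,
        show ((⟨1, by norm_num⟩ : Fin 2) = 1) from rfl, Matrix.cons_val', Matrix.cons_val_zero,
        Matrix.cons_val_one, Matrix.head_cons, Matrix.empty_val', Matrix.cons_val_fin_one,
        Matrix.head_fin_const, Matrix.of_apply, abs_neg] <;>
      first | exact cl2 | exact cl1 | exact cl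
  refine ⟨⟨by rw [hmaxA]; exact nA_lower, by rw [hmaxA]; exact nA_upper⟩,
    ⟨by rw [hmaxB]; exact nB_lower, by rw [hmaxB]; exact nB_upper⟩, ⟨?_, ?_⟩, ?_, ?_⟩
  · -- lower bound for A^p B^q
    have hent : (A ^ (k+1) * B ^ (l+1)) 0 0 = f (k+2) * g (l+2) - f (k+1) * g (l+1) := by
      rw [hApow, hBpow, Matrix.mul_fin_two]
      simp
      try ring
    have hcast : Ffun (k+1+1) lam * Ffun (l+1+1) mu - Ffun (k+1) lam * Ffun (l+1) mu
        = ((f (k+2) * g (l+2) - f (k+1) * g (l+1) : ℝ) : ℂ) := by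
      simp only [← hfF, ← hgF]
      push_cast
      ring
    rw [hcast, Complex.norm_real, Real.norm_eq_abs, ← hent]
    exact entry_abs_le_l2norm _ 0 0
  · -- upper bound for A^p B^q
    calc ‖A ^ (k+1) * B ^ (l+1)‖ ≤ ‖A ^ (k+1)‖ * ‖B ^ (l+1)‖ := Matrix.l2_opNorm_mul _ _
      _ ≤ (2 * mA) * (2 * mB) :=
        mul_le_mul nA_upper nB_upper (norm_nonneg _) (by positivity)
      _ = 4 * mA * mB := by ring
      _ = 4 * maxF3 (k+1) lam * maxF3 (l+1) mu := by rw [hmaxA, hmaxB]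
  · -- part 3
    have hent : (B ^ (2*(k+1)) * A ^ (k+1) * B ^ (k+1)) 0 0
        = g (2*k+1+2) * (f (k+2) * g (k+2) - f (k+1) * g (k+1))
          - g (2*k+1+1) * (f (k+1) * g (k+2) - f k * g (k+1)) := by
      rw [mul_assoc, hApow, hBp, Matrix.mul_fin_two, hB2p, Matrix.mul_fin_two]
      simp
      try ring
    have hcast : Ffun (2*(k+1)+1) mu *
          (Ffun (k+1+1) lam * Ffun (k+1+1) mu - Ffun (k+1) lam * Ffun (k+1) mu) -
        Ffun (2*(k+1)) mu *
          (Ffun (k+1) lam * Ffun (k+1+1) mu - Ffun (k+1-1) lam * Ffun (k+1) mu)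
        = ((g (2*k+1+2) * (f (k+2) * g (k+2) - f (k+1) * g (k+1))
          - g (2*k+1+1) * (f (k+1) * g (k+2) - f k * g (k+1)) : ℝ) : ℂ) := by
      rw [show 2*(k+1)+1 = 2*k+1+2 by ring, show 2*(k+1) = 2*k+1+1 by ring,
        Nat.add_sub_cancel]
      simp only [← hfF, ← hgF]
      push_cast
      ring
    rw [hcast, Complex.norm_real, Real.norm_eq_abs, ← hent]
    exact entry_abs_le_l2norm _ 0 0
  · -- part 4
    have hassoc : A ^ (k+1) * B ^ (l+1) * (A ^ (k+1)) * B ^ (l+1)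
        = (A ^ (k+1) * B ^ (l+1)) * (A ^ (k+1) * B ^ (l+1)) := by
      rw [mul_assoc (A ^ (k+1) * B ^ (l+1))]
    have hprod : A ^ (k+1) * B ^ (l+1)
        = !![f (k+2) * g (l+2) + -f (k+1) * g (l+1), f (k+2) * -g (l+1) + -f (k+1) * -g l;
             f (k+1) * g (l+2) + -f k * g (l+1), f (k+1) * -g (l+1) + -f k * -g l] := by
      rw [hApow, hBpow, Matrix.mul_fin_two]
    have hent : (A ^ (k+1) * B ^ (l+1) * (A ^ (k+1)) * B ^ (l+1)) 0 0
        = (f (k+2) * g (l+2) - f (k+1) * g (l+1)) ^ 2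
          + (-(f (k+2) * g (l+1)) + f (k+1) * g l) * (f (k+1) * g (l+2) - f k * g (l+1)) := by
      rw [hassoc, hprod, Matrix.mul_fin_two]
      simp
      try ring
    have hcast : (Ffun (k+1+1) lam * Ffun (l+1+1) mu - Ffun (k+1) lam * Ffun (l+1) mu) ^ 2 +
        (-(Ffun (k+1+1) lam * Ffun (l+1) mu) + Ffun (k+1) lam * Ffun (l+1-1) mu) *
          (Ffun (k+1) lam * Ffun (l+1+1) mu - Ffun (k+1-1) lam * Ffun (l+1) mu)
        = (((f (k+2) * g (l+2) - f (k+1) * g (l+1)) ^ 2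
          + (-(f (k+2) * g (l+1)) + f (k+1) * g l) * (f (k+1) * g (l+2) - f k * g (l+1)) : ℝ) : ℂ) := by
      rw [Nat.add_sub_cancel, Nat.add_sub_cancel]
      simp only [← hfF, ← hgF]
      push_cast
      ring
    rw [hcast, Complex.norm_real, Real.norm_eq_abs, ← hent]
    exact entry_abs_le_l2norm _ 0 0
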